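/- Every closed trapezoidal word over {a,b} is Sturmian. -/

import Mathlib

/-- The two-letter alphabet {a, b}. -/
inductive AB : Type
  | a : AB
  | b : AB
deriving DecidableEq, Repr

/-- A (finite) word over {a, b}. -/
abbrev Word := List AB

open AB

/-- `u` occurs in `w` at position `i`. -/
def OccursAt (u w : Word) (i : ℕ) : Prop :=
  i + u.length ≤ w.length ∧ (w.drop i).take u.length = u

/-- `u` occurs exactly once in `w` (is unrepeated in `w`). -/
def OccursOnce (u w : Word) : Prop := ∃! i, OccursAt u w i

/-- `u` is a right special factor of `w`: both `ua` and `ub` are factors of `w`. -/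
def IsRightSpecial (u w : Word) : Prop := (u ++ [a]) <:+: w ∧ (u ++ [b]) <:+: w

/-- `u` is a left special factor of `w`: both `au` and `bu` are factors of `w`. -/
def IsLeftSpecial (u w : Word) : Prop := ([a] ++ u) <:+: w ∧ ([b] ++ u) <:+: w

/-- `K w`: the length of the shortest unrepeated suffix of `w`. -/
noncomputable def Kp (w : Word) : ℕ := sInf {n | ∃ s : Word, s <:+ w ∧ s.length = n ∧ OccursOnce s w}

/-- `H w`: the length of the shortest unrepeated prefix of `w`. -/
noncomputable def Hp (w : Word) : ℕ := sInf {n | ∃ p : Word, p <+: w ∧ p.length = n ∧ OccursOnce p w}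

/-- `R w`: the smallest `n ≥ 0` such that `w` has no right special factor of length `n`. -/
noncomputable def Rp (w : Word) : ℕ := sInf {n | ∀ u : Word, u.length = n → ¬ IsRightSpecial u w}

/-- `L w`: the smallest `n ≥ 0` such that `w` has no left special factor of length `n`. -/
noncomputable def Lp (w : Word) : ℕ := sInf {n | ∀ u : Word, u.length = n → ¬ IsLeftSpecial u w}

/-- A word `w` is trapezoidal if `|w| = K w + R w`. -/
def IsTrapezoidal (w : Word) : Prop := w.length = Kp w + Rp w

/-- A finite word over `{a,b}` is Sturmian iff it is balanced: there is no word `u`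
with both `aua` and `bub` factors of `w`. -/
def IsSturmian (w : Word) : Prop :=
  ¬ ∃ u : Word, ([a] ++ u ++ [a]) <:+: w ∧ ([b] ++ u ++ [b]) <:+: w

/-- A nonempty word is closed if it has a border (a proper prefix which is also a suffix)
whose only occurrences in `w` are as a prefix and as a suffix. -/
def IsClosedWord (w : Word) : Prop :=
  w ≠ [] ∧ ∃ v : Word, v <+: w ∧ v.length < w.length ∧ v <:+ w ∧
    ∀ i : ℕ, OccursAt v w i → i = 0 ∨ i + v.length = w.length

/-- A nonempty word is open if it is not closed. -/
def IsOpenWord (w : Word) : Prop := w ≠ [] ∧ ¬ IsClosedWord w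

/-- Central words: `a^n`, `b^n`, or `u a b v = v b a u`. -/
def IsCentral (w : Word) : Prop :=
  (∃ n : ℕ, w = List.replicate n a) ∨ (∃ n : ℕ, w = List.replicate n b) ∨
  (∃ u v : Word, w = u ++ [a, b] ++ v ∧ w = v ++ [b, a] ++ u)

/-- The minimal period of `w`: `|w|` minus the length of the longest border of `w`. -/
noncomputable def minPeriod (w : Word) : ℕ :=
  w.length - sSup {n | ∃ v : Word, v.length = n ∧ v <+: w ∧ v ≠ w ∧ v <:+ w}


section Aux

lemma occursAt_iff {u w : Word} {i : ℕ} :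
    OccursAt u w i ↔ i + u.length ≤ w.length ∧
      ∀ t < u.length, w.getD (i + t) a = u.getD t a := by
  unfold OccursAt
  refine and_congr_right fun hle => ?_
  constructor
  · intro he t ht
    have h2 := congrArg (fun l => l.getD t a) he
    rw [← h2, List.getD_eq_getElem _ _ (by omega),
      List.getD_eq_getElem _ _ (by simp; omega)]
    rw [List.getElem_take, List.getElem_drop]
  · intro h
    apply List.ext_getElem
    · simp; omega
    · intro t h1 h2
      have ht : t < u.length := h2
      have := h t ht
      rw [List.getD_eq_getElem _ _ (by omega), List.getD_eq_getElem _ _ ht] at this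
      simpa [List.getElem_take, List.getElem_drop] using this

lemma infix_iff_occursAt {u w : Word} : u <:+: w ↔ ∃ i, OccursAt u w i := by
  constructor
  · rintro ⟨s, t, rfl⟩
    refine ⟨s.length, by simp, ?_⟩
    rw [show s ++ u ++ t = s ++ (u ++ t) by simp, List.drop_left' rfl]
    exact List.take_left' rfl
  · rintro ⟨i, hle, h⟩
    refine ⟨w.take i, (w.drop i).drop u.length, ?_⟩
    have h2 : u ++ (w.drop i).drop u.length = w.drop i := by
      conv_rhs => rw [← List.take_append_drop u.length (w.drop i)]
      rw [h]
    rw [List.append_assoc, h2, List.take_append_drop]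

lemma drop_of_suffix {u w : Word} (h : u <:+ w) :
    w.drop (w.length - u.length) = u := by
  obtain ⟨s, rfl⟩ := h
  simp

lemma suffix_iff_occursAt {u w : Word} :
    u <:+ w ↔ OccursAt u w (w.length - u.length) := by
  constructor
  · intro h
    have hle : u.length ≤ w.length := h.length_le
    have hd := drop_of_suffix h
    refine ⟨by omega, ?_⟩
    rw [hd]
    exact List.take_of_length_le le_rfl
  · rintro ⟨hle, h⟩
    have hul : u.length ≤ w.length := by omega
    have : (w.drop (w.length - u.length)).length = u.length := by simp; omega
    have h3 : w.drop (w.length - u.length) = u := by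
      conv_rhs => rw [← h]
      exact (List.take_of_length_le this.le).symm
    exact h3 ▸ List.drop_suffix _ _

lemma prefix_iff_occursAt {u w : Word} : u <+: w ↔ OccursAt u w 0 := by
  constructor
  · rintro ⟨s, rfl⟩
    exact ⟨by simp, by rw [List.drop_zero]; exact List.take_left' rfl⟩
  · rintro ⟨hle, h⟩
    rw [List.drop_zero] at h
    rw [← h]
    exact List.take_prefix _ _

/-- occurrence of `u.drop j` inside an occurrence of `u` -/
lemma occursAt_drop {u w : Word} {i : ℕ} (h : OccursAt u w i) (j : ℕ) (hj : j ≤ u.length) :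
    OccursAt (u.drop j) w (i + j) := by
  rw [occursAt_iff] at h ⊢
  obtain ⟨hle, h⟩ := h
  refine ⟨by simp; omega, fun t ht => ?_⟩
  have ht' : t < u.length - j := by simpa using ht
  have := h (j + t) (by omega)
  rw [show i + j + t = i + (j + t) by omega, this,
    List.getD_eq_getElem _ _ (by omega), List.getD_eq_getElem _ _ (by simpa using ht'),
    List.getElem_drop]


lemma Kp_closed {w : Word} {v : Word} (hpre : v <+: w) (hvlt : v.length < w.length)
    (hsuf : v <:+ w)
    (hocc : ∀ i : ℕ, OccursAt v w i → i = 0 ∨ i + v.length = w.length) :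
    Kp w = v.length + 1 := by
  set N := w.length with hN
  set V := v.length with hV
  have hmem : (V + 1) ∈ {n | ∃ s : Word, s <:+ w ∧ s.length = n ∧ OccursOnce s w} := by
    refine ⟨w.drop (N - (V+1)), List.drop_suffix _ _, by simp [hN]; omega, ?_⟩
    have hslen : (w.drop (N - (V+1))).length = V + 1 := by simp [hN]; omega
    refine ⟨N - (V+1), ?_, ?_⟩
    · rw [← hslen]
      have := suffix_iff_occursAt.mp (List.drop_suffix (N - (V+1)) w)
      rw [hslen] at this ⊢; exact this
    · intro i hi
      have h1 : OccursAt ((w.drop (N - (V+1))).drop 1) w (i + 1) :=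
        occursAt_drop hi 1 (by omega)
      have h2 : (w.drop (N - (V+1))).drop 1 = v := by
        rw [List.drop_drop]
        have := drop_of_suffix hsuf
        rw [show N - (V+1) + 1 = N - V by omega]
        exact this
      rw [h2] at h1
      rcases hocc _ h1 with h | h
      · omega
      · omega
  have hub : ∀ n ∈ {n | ∃ s : Word, s <:+ w ∧ s.length = n ∧ OccursOnce s w}, V + 1 ≤ n := by
    rintro n ⟨s, hs, hslen, honce⟩
    by_contra hlt
    have hn : n ≤ V := by omega
    have hocc1 : OccursAt s w (N - n) := by
      have := suffix_iff_occursAt.mp hs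
      rwa [hslen] at this
    have hocc2 : OccursAt s w (V - n) := by
      have h0 : OccursAt v w 0 := prefix_iff_occursAt.mp hpre
      have h1 := occursAt_drop h0 (V - n) (by omega)
      have h2 : v.drop (V - n) = s := by
        have h3 : v = w.drop (N - V) := (drop_of_suffix hsuf).symm
        have h4 : s = w.drop (N - n) := (drop_of_suffix hs).symm.trans (by rw [hslen])
        rw [h3, h4, List.drop_drop]
        congr 1
        omega
      rwa [h2, zero_add] at h1
    obtain ⟨i0, _, huniq⟩ := honce
    have e1 := huniq _ hocc1
    have e2 := huniq _ hocc2
    omega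
  unfold Kp
  exact le_antisymm (Nat.sInf_le hmem) (le_csInf ⟨_, hmem⟩ hub)

def chi : AB → ℤ := fun x => match x with | AB.a => 1 | AB.b => 0

lemma chi_ne {x y : AB} (h : x ≠ y) : chi x - chi y = 1 ∨ chi x - chi y = -1 := by
  cases x <;> cases y <;> simp_all [chi]

lemma AB_eq_or {x y : AB} : x = y ∨ x ≠ y := by exact eq_or_ne x y

lemma sum_shift {P : ℕ} [NeZero P] (f : ZMod P → ℤ) (δ : ZMod P) :
    ∑ k : ZMod P, f (k + δ) = ∑ k : ZMod P, f k :=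
  Fintype.sum_equiv (Equiv.addRight δ) _ _ (fun _ => rfl)

/-- if `c` agrees with its `δ`-shift everywhere except at exactly one known point where
it disagrees, contradiction. -/
lemma no_single_mismatch {P : ℕ} [NeZero P] (c : ZMod P → AB) (δ k0 : ZMod P)
    (h0 : c (k0 + δ) ≠ c k0)
    (hrest : ∀ k, k ≠ k0 → c (k + δ) = c k) : False := by
  have hsum : ∑ k : ZMod P, (chi (c (k + δ)) - chi (c k)) = 0 := by
    rw [Finset.sum_sub_distrib, sum_shift (fun k => chi (c k)) δ, sub_self]
  rw [Finset.sum_eq_single_of_mem k0 (Finset.mem_univ _)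
      (fun k _ hk => by rw [hrest k hk, sub_self])] at hsum
  rcases chi_ne h0 with h | h <;> omega

/-- key sum argument: from a "mismatch at x, agreement off {x, x+1}" structure,
`δ0` must be invertible and there must also be a mismatch at `x+1`. -/
lemma unit_and_second_mismatch {P : ℕ} [NeZero P] (c : ZMod P → AB) (x δ0 : ZMod P)
    (hx : c x = a) (hxd : c (x + δ0) = b)
    (hE : ∀ k, k ≠ x → k ≠ x + 1 → c (k + δ0) = c k) :
    (∃ s : ZMod P, s * δ0 = 1) ∧ c (x + 1 + δ0) ≠ c (x + 1) := by
  have key : ∀ (bad : ZMod P → Prop), (∀ s, bad s → chi (c (x + s * δ0 + δ0)) - chi (c (x + s * δ0)) ≤ 0) →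
      (∀ s, ¬ bad s → x + s * δ0 ≠ x ∧ x + s * δ0 ≠ x + 1) → False := by
    intro bad hbad hnbad
    have hsum : ∑ s : ZMod P, (chi (c (x + s * δ0 + δ0)) - chi (c (x + s * δ0))) = 0 := by
      rw [Finset.sum_sub_distrib]
      have : ∀ s : ZMod P, x + s * δ0 + δ0 = x + (s + 1) * δ0 := by intro s; ring
      simp_rw [this]
      rw [sum_shift (fun s => chi (c (x + s * δ0))) 1, sub_self]
    have hle : ∀ s : ZMod P, chi (c (x + s * δ0 + δ0)) - chi (c (x + s * δ0)) ≤ 0 := by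
      intro s
      by_cases hb : bad s
      · exact hbad s hb
      · obtain ⟨h1, h2⟩ := hnbad s hb
        rw [hE _ h1 h2, sub_self]
    have h0 : chi (c (x + (0:ZMod P) * δ0 + δ0)) - chi (c (x + (0:ZMod P) * δ0)) = -1 := by
      simp only [zero_mul, add_zero, hx, hxd]; rfl
    have hlt : ∑ s : ZMod P, (chi (c (x + s * δ0 + δ0)) - chi (c (x + s * δ0))) < 0 := by
      calc ∑ s : ZMod P, (chi (c (x + s * δ0 + δ0)) - chi (c (x + s * δ0)))
          < ∑ _s : ZMod P, (0:ℤ) := by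
            apply Finset.sum_lt_sum (fun i _ => hle i) ⟨0, Finset.mem_univ _, by omega⟩
        _ = 0 := by simp
    omega
  have hcov : ∀ s : ZMod P, x + s * δ0 = x + 1 → s * δ0 = 1 := by
    intro s hs
    have := add_left_cancel hs
    exact this
  have hunit : ∃ s : ZMod P, s * δ0 = 1 := by
    by_contra hns
    push_neg at hns
    apply key (fun s => x + s * δ0 = x)
    · intro s hb
      rw [hb, hx, hxd]; norm_num [chi]
    · intro s hnb
      exact ⟨hnb, fun hc => hns s (hcov s hc)⟩
  refine ⟨hunit, ?_⟩
  intro heq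
  apply key (fun s => x + s * δ0 = x ∨ x + s * δ0 = x + 1)
  · intro s hb
    rcases hb with hb | hb
    · rw [hb, hx, hxd]; norm_num [chi]
    · rw [show x + s * δ0 + δ0 = x + s*δ0 + δ0 by rfl, hb, heq, sub_self]
  · intro s hnb
    push_neg at hnb
    exact hnb

lemma ediv_small_neg {x Pz : ℤ} (h0 : -Pz ≤ x) (h1 : x < 0) : x / Pz = -1 := by
  have hP : 0 < Pz := by omega
  have heq : x = (x + Pz) + Pz * (-1) := by ring
  rw [heq, Int.add_mul_ediv_left _ _ (by omega : Pz ≠ 0),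
    Int.ediv_eq_zero_of_lt (a := x + Pz) (by omega) (by omega)]
  norm_num

lemma ind_eq_ediv_sub {A t0 Pz : ℤ} (h1 : 0 < t0) (h2 : t0 < Pz) :
    (if A % Pz < t0 then (1:ℤ) else 0) = A / Pz - (A - t0) / Pz := by
  have hP : 0 < Pz := by omega
  have hA : A = (Pz * (A / Pz) + A % Pz) := (Int.mul_ediv_add_emod A Pz).symm
  have hr0 : 0 ≤ A % Pz := Int.emod_nonneg A (by omega)
  have hr1 : A % Pz < Pz := Int.emod_lt_of_pos A hP
  have hsub : (A - t0) / Pz = (A % Pz - t0) / Pz + A / Pz := by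
    conv_lhs => rw [show A - t0 = (A % Pz - t0) + Pz * (A / Pz) by omega]
    rw [Int.add_mul_ediv_left _ _ (by omega : Pz ≠ 0)]
  by_cases hc : A % Pz < t0
  · rw [if_pos hc, hsub, ediv_small_neg (x := A % Pz - t0) (Pz := Pz) (by omega) (by omega)]
    ring
  · rw [if_neg hc, hsub, Int.ediv_eq_zero_of_lt (a := A % Pz - t0) (by omega) (by omega)]
    ring

lemma int_count (Pz t0 G : ℤ) (h1 : 0 < t0) (h2 : t0 < Pz) (L : ℕ) :
    ((L : ℤ) * t0) / Pz ≤ (∑ t ∈ Finset.range L, if (G - (t:ℤ) * t0) % Pz < t0 then (1:ℤ) else 0)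
    ∧ (∑ t ∈ Finset.range L, if (G - (t:ℤ) * t0) % Pz < t0 then (1:ℤ) else 0)
      ≤ ((L : ℤ) * t0) / Pz + 1 := by
  have hP : 0 < Pz := by omega
  have htel : (∑ t ∈ Finset.range L, if (G - (t:ℤ) * t0) % Pz < t0 then (1:ℤ) else 0)
      = G / Pz - (G - (L:ℤ) * t0) / Pz := by
    have : ∀ t ∈ Finset.range L, (if (G - (t:ℤ) * t0) % Pz < t0 then (1:ℤ) else 0)
        = (fun t : ℕ => (G - (t:ℤ) * t0) / Pz) t - (fun t : ℕ => (G - (t:ℤ) * t0) / Pz) (t + 1) := by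
      intro t _
      rw [ind_eq_ediv_sub h1 h2]
      simp only
      congr 2
      push_cast
      ring
    rw [Finset.sum_congr rfl this, Finset.sum_range_sub']
    simp
  rw [htel]
  -- bound : with G = Pz*q + r
  have hr0 : 0 ≤ G % Pz := Int.emod_nonneg G (by omega)
  have hr1 : G % Pz < Pz := Int.emod_lt_of_pos G hP
  have hM0 : 0 ≤ (L:ℤ) * t0 := by positivity
  set M : ℤ := (L:ℤ) * t0 with hM
  have hu0 : 0 ≤ M % Pz := Int.emod_nonneg M (by omega)
  have hu1 : M % Pz < Pz := Int.emod_lt_of_pos M hP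
  have hsub : (G - M) / Pz = (G % Pz - M) / Pz + G / Pz := by
    conv_lhs => rw [show G - M = (G % Pz - M) + Pz * (G / Pz) by
      linear_combination -Int.mul_ediv_add_emod G Pz]
    rw [Int.add_mul_ediv_left _ _ (by omega : Pz ≠ 0)]
  have hsub2 : (G % Pz - M) / Pz = (G % Pz - M % Pz) / Pz - M / Pz := by
    conv_lhs => rw [show G % Pz - M = (G % Pz - M % Pz) + Pz * (-(M / Pz)) by
      linear_combination Int.mul_ediv_add_emod M Pz]
    rw [Int.add_mul_ediv_left _ _ (by omega : Pz ≠ 0)]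
    ring
  have hfin : (G % Pz - M % Pz) / Pz = 0 ∨ (G % Pz - M % Pz) / Pz = -1 := by
    by_cases hc : 0 ≤ G % Pz - M % Pz
    · left; exact Int.ediv_eq_zero_of_lt hc (by omega)
    · right; exact ediv_small_neg (x := G % Pz - M % Pz) (Pz := Pz) (by omega) (by omega)
  have hMdiv : 0 ≤ M / Pz := Int.ediv_nonneg hM0 (by omega)
  constructor <;> [skip; skip] <;> omega

lemma AB_two {x y z : AB} (hxy : x ≠ y) (hzx : z ≠ x) : z = y := by
  cases x <;> cases y <;> cases z <;> simp_all

lemma zmod_cast_val {P : ℕ} [NeZero P] (k : ZMod P) : ((k.val : ℕ) : ZMod P) = k :=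
  ZMod.natCast_rightInverse k

lemma neg_one_emod {Pz : ℤ} (hP : 0 < Pz) : (-1) % Pz = Pz - 1 := by
  have h : (-1 + Pz * 1) % Pz = (-1) % Pz := Int.add_mul_emod_self_left (-1) Pz 1
  rw [← h]
  have h2 : -1 + Pz * 1 = Pz - 1 := by ring
  rw [h2, Int.emod_eq_of_lt (by omega) (by omega)]

lemma zmod_shift {P : ℕ} [NeZero P] {M : ZMod P} {t0 : ℕ} (ht1 : 1 ≤ t0) (ht2 : t0 < P) :
    (1 ≤ M.val ∧ M.val ≤ t0) ↔ (M - 1).val < t0 := by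
  have hPpos : 0 < P := Nat.pos_of_ne_zero (NeZero.ne P)
  have hMv : M.val < P := ZMod.val_lt M
  have hM1 : M - 1 = (((M.val : ℤ) - 1 : ℤ) : ZMod P) := by
    push_cast [zmod_cast_val]
    ring
  have hval : ((M - 1).val : ℤ) = ((M.val : ℤ) - 1) % (P : ℤ) := by
    rw [hM1, ZMod.val_intCast]
  by_cases hc : 1 ≤ M.val
  · rw [Int.emod_eq_of_lt (by omega) (by omega)] at hval
    omega
  · have h0 : M.val = 0 := by omega
    rw [h0] at hval
    simp only [Nat.cast_zero, zero_sub] at hval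
    rw [neg_one_emod (by omega)] at hval
    omega

lemma window_balance {P : ℕ} [NeZero P] (hP2 : 2 ≤ P) (c : ZMod P → AB)
    (x δ0 s0 : ZMod P) (hs0 : s0 * δ0 = 1)
    (hx : c (x + δ0) ≠ c x) (hx1 : c (x + 1 + δ0) ≠ c (x + 1))
    (hE : ∀ k, k ≠ x → k ≠ x + 1 → c (k + δ0) = c k) :
    ∃ L1 : AB, ∃ t0 : ℕ, 1 ≤ t0 ∧ t0 < P ∧ s0 = -((t0 : ℕ) : ZMod P) ∧
      ∀ k : ZMod P, c k = L1 ↔ (1 ≤ ((k - x - 1) * s0).val ∧ ((k - x - 1) * s0).val ≤ t0) := by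
  haveI : Fact (1 < P) := ⟨hP2⟩
  have hδs : δ0 * s0 = 1 := by rw [mul_comm]; exact hs0
  set t1 : ZMod P := -s0 with ht1def
  have hs0ne : s0 ≠ 0 := fun h => by simp [h] at hs0
  have ht1ne : t1 ≠ 0 := by simp [ht1def, hs0ne]
  set t0 : ℕ := t1.val with ht0def
  have ht0c : ((t0 : ℕ) : ZMod P) = t1 := zmod_cast_val t1
  have ht01 : 1 ≤ t0 := by
    by_contra h
    exact ht1ne ((ZMod.val_eq_zero t1).mp (by omega))
  have ht0P : t0 < P := ZMod.val_lt t1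
  -- the step function
  set y : ℕ → AB := fun t => c (x + 1 + (t : ZMod P) * δ0) with hy
  have hmulinj : ∀ s s' : ZMod P, s * δ0 = s' * δ0 → s = s' := by
    intro s s' h
    have := congrArg (· * s0) h
    simpa [mul_assoc, hδs] using this
  have hstep : ∀ s : ZMod P, s ≠ 0 → s ≠ t1 → c (x + 1 + (s + 1) * δ0) = c (x + 1 + s * δ0) := by
    intro s h0 h1
    have hk1 : x + 1 + s * δ0 ≠ x := by
      intro h
      apply h1
      apply hmulinj
      have h3 : s * δ0 = -1 := by linear_combination h
      rw [h3, ht1def]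
      linear_combination hs0
    have hk2 : x + 1 + s * δ0 ≠ x + 1 := by
      intro h
      apply h0
      apply hmulinj (s' := 0)
      have h3 : s * δ0 = 0 := by linear_combination h
      rw [h3]
      ring
    have := hE _ hk1 hk2
    rw [← this]
    congr 1
    ring
  have hflip0 : y 1 ≠ y 0 := by
    simp only [hy, Nat.cast_one, Nat.cast_zero, one_mul, zero_mul, add_zero]
    exact hx1
  have hflipt0 : y (t0 + 1) ≠ y t0 := by
    simp only [hy]
    push_cast [ht0c]
    have e1 : x + 1 + (t1 + 1) * δ0 = (x + δ0) + (1 + t1 * δ0) := by ring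
    have e2 : x + 1 + t1 * δ0 = x + (1 + t1 * δ0) := by ring
    have ht1δ : t1 * δ0 = -1 := by rw [ht1def]; linear_combination -hs0
    rw [e1, e2, ht1δ]
    simpa using hx
  set L1 : AB := y 1 with hL1
  have claim1 : ∀ t : ℕ, 1 ≤ t → t ≤ t0 → y t = L1 := by
    intro t
    induction t with
    | zero => omega
    | succ n ih =>
      intro _ hle
      rcases Nat.eq_zero_or_pos n with h | h
      · subst h; exact hL1.symm
      · have hn : y n = L1 := ih h (by omega)
        have hne0 : ((n : ℕ) : ZMod P) ≠ 0 := by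
          intro hc
          have h2 := congrArg ZMod.val hc
          rw [ZMod.val_natCast, Nat.mod_eq_of_lt (by omega)] at h2
          simp at h2
          omega
        have hnt1 : ((n : ℕ) : ZMod P) ≠ t1 := by
          intro hc
          have h2 := congrArg ZMod.val hc
          rw [ZMod.val_natCast, Nat.mod_eq_of_lt (by omega)] at h2
          omega
        have hst := hstep (n : ZMod P) hne0 hnt1
        simp only [hy, Nat.cast_add, Nat.cast_one]
        rw [hst]
        exact hn
  have claim2 : ∀ t : ℕ, t0 + 1 ≤ t → t < P → y t ≠ L1 := by
    have base : y (t0 + 1) ≠ L1 := by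
      rw [hL1]
      intro hc
      exact hflipt0 (hc.trans (claim1 t0 ht01 le_rfl).symm)
    intro t
    induction t with
    | zero => omega
    | succ n ih =>
      intro hge hlt
      rcases Nat.lt_or_ge n (t0 + 1) with h | h
      · have : n = t0 := by omega
        subst this
        exact base
      · have hn : y n ≠ L1 := ih h (by omega)
        have hne0 : ((n : ℕ) : ZMod P) ≠ 0 := by
          intro hc
          have h2 := congrArg ZMod.val hc
          rw [ZMod.val_natCast, Nat.mod_eq_of_lt (by omega)] at h2
          simp at h2
          omega
        have hnt1 : ((n : ℕ) : ZMod P) ≠ t1 := by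
          intro hc
          have h2 := congrArg ZMod.val hc
          rw [ZMod.val_natCast, Nat.mod_eq_of_lt (by omega)] at h2
          omega
        have hst := hstep (n : ZMod P) hne0 hnt1
        simp only [hy, Nat.cast_add, Nat.cast_one]
        rw [hst]
        exact hn
  have hy0 : y 0 ≠ L1 := fun hc => hflip0 hc.symm
  refine ⟨L1, t0, ht01, ht0P, by rw [ht0c, ht1def]; ring, ?_⟩
  intro k
  set tv : ℕ := ((k - x - 1) * s0).val with htv
  have htvP : tv < P := ZMod.val_lt _
  have hk : c k = y tv := by
    simp only [hy]
    congr 1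
    rw [htv, zmod_cast_val]
    have h5 : (k - x - 1) * s0 * δ0 = k - x - 1 := by
      rw [mul_assoc, hs0, mul_one]
    rw [h5]
    ring
  constructor
  · intro hck
    by_contra hc
    push_neg at hc
    rcases Nat.eq_zero_or_pos tv with h0 | h0
    · rw [hk, h0] at hck; exact hy0 hck
    · have : t0 + 1 ≤ tv := by
        rcases Nat.lt_or_ge t0 tv with h | h
        · omega
        · omega
      rw [hk] at hck
      exact claim2 tv this htvP hck
  · intro ⟨h1, h2⟩
    rw [hk]
    exact claim1 tv h1 h2

-- getD helpers
lemma getD_append_left' (l l' : List AB) (t : ℕ) (h : t < l.length) :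
    (l ++ l').getD t a = l.getD t a := by
  simp [List.getD, List.getElem?_append_left h]

lemma getD_append_at (l : List AB) (x : AB) : (l ++ [x]).getD l.length a = x := by
  simp [List.getD]

lemma getD_cons_succ' (x : AB) (l : List AB) (t : ℕ) : (x :: l).getD (t+1) a = l.getD t a := rfl

lemma count_bound {P : ℕ} [NeZero P] (c : ZMod P → AB) (L1 : AB)
    (x s0 : ZMod P) (t0 : ℕ) (ht01 : 1 ≤ t0) (ht0P : t0 < P)
    (hs0 : s0 = -((t0 : ℕ) : ZMod P))
    (hchar : ∀ k : ZMod P, c k = L1 ↔ (1 ≤ ((k - x - 1) * s0).val ∧ ((k - x - 1) * s0).val ≤ t0))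
    (k0 : ZMod P) (L : ℕ) :
    ((L : ℤ) * t0) / (P:ℤ) ≤ (∑ t ∈ Finset.range L, if c (k0 + (t:ℕ)) = L1 then (1:ℤ) else 0)
    ∧ (∑ t ∈ Finset.range L, if c (k0 + (t:ℕ)) = L1 then (1:ℤ) else 0)
      ≤ ((L : ℤ) * t0) / (P:ℤ) + 1 := by
  set γ : ZMod P := (k0 - x - 1) * s0 - 1 with hγ
  set G : ℤ := (γ.val : ℤ) with hG
  have key : ∀ t : ℕ, (k0 + (t:ℕ) - x - 1) * s0 - 1 = ((G - (t:ℤ) * (t0:ℤ) : ℤ) : ZMod P) := by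
    intro t
    have h1 : ((G - (t:ℤ) * (t0:ℤ) : ℤ) : ZMod P) = γ - (t : ℕ) * ((t0:ℕ) : ZMod P) := by
      rw [hG]
      push_cast [zmod_cast_val]
      ring
    rw [h1, hγ, hs0]
    ring
  have hterm : ∀ t : ℕ, (if c (k0 + (t:ℕ)) = L1 then (1:ℤ) else 0)
      = (if ((G - (t:ℤ)*(t0:ℤ)) % (P:ℤ)) < (t0:ℤ) then (1:ℤ) else 0) := by
    intro t
    have hiff : (c (k0 + (t:ℕ)) = L1) ↔ (((G - (t:ℤ)*(t0:ℤ)) % (P:ℤ)) < (t0:ℤ)) := by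
      rw [hchar, zmod_shift ht01 ht0P, key t]
      have hval := ZMod.val_intCast (n := P) (G - (t:ℤ)*(t0:ℤ))
      constructor
      · intro h
        have : ((((G - (t:ℤ)*(t0:ℤ) : ℤ) : ZMod P)).val : ℤ) < (t0:ℤ) := by exact_mod_cast h
        omega
      · intro h
        have : ((((G - (t:ℤ)*(t0:ℤ) : ℤ) : ZMod P)).val : ℤ) < (t0:ℤ) := by omega
        exact_mod_cast this
    exact if_congr hiff rfl rfl
  have hsum : (∑ t ∈ Finset.range L, if c (k0 + (t:ℕ)) = L1 then (1:ℤ) else 0)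
      = ∑ t ∈ Finset.range L, (if ((G - (t:ℤ)*(t0:ℤ)) % (P:ℤ)) < (t0:ℤ) then (1:ℤ) else 0) :=
    Finset.sum_congr rfl (fun t _ => hterm t)
  rw [hsum]
  exact int_count (P:ℤ) (t0:ℤ) G (by exact_mod_cast ht01) (by exact_mod_cast ht0P) L

lemma full_window_case {P : ℕ} [NeZero P] (c : ZMod P → AB) (ki kj : ZMod P) (u : Word)
    (hu1 : ∀ t : ℕ, t < P → c (ki + (t:ℕ)) = ([a] ++ u).getD t a)
    (hu2 : ∀ t : ℕ, t < P → c (kj + (t:ℕ)) = ([b] ++ u).getD t a) : False := by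
  have hPpos : 0 < P := Nat.pos_of_ne_zero (NeZero.ne P)
  apply no_single_mismatch c (kj - ki) ki
  · have h1 : c ki = a := by
      have := hu1 0 hPpos
      simpa using this
    have h2 : c (ki + (kj - ki)) = b := by
      have := hu2 0 hPpos
      rw [show ki + (kj - ki) = kj by ring]
      simpa using this
    rw [h1, h2]
    simp
  · intro k hk
    set t : ℕ := (k - ki).val with ht
    have htP : t < P := ZMod.val_lt _
    have hkt : k = ki + (t:ℕ) := by rw [ht, zmod_cast_val]; ring
    have ht1 : 1 ≤ t := by
      rcases Nat.eq_zero_or_pos t with h | h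
      · exfalso
        apply hk
        rw [hkt, h]
        simp
      · exact h
    have e1 : c k = u.getD (t-1) a := by
      rw [hkt, hu1 t htP]
      have : ([a] ++ u) = a :: u := rfl
      rw [this, show t = (t-1)+1 by omega, getD_cons_succ']
      all_goals (congr 1 <;> omega)
    have e2 : c (k + (kj - ki)) = u.getD (t-1) a := by
      have hkt2 : k + (kj - ki) = kj + (t:ℕ) := by rw [hkt]; ring
      rw [hkt2, hu2 t htP]
      have : ([b] ++ u) = b :: u := rfl
      rw [this, show t = (t-1)+1 by omega, getD_cons_succ']
      all_goals (congr 1 <;> omega)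
    rw [e1, e2]

lemma circular_case {P : ℕ} [NeZero P] (hP2 : 2 ≤ P) (c : ZMod P → AB)
    (r1 r2 : ZMod P) (z : Word) (hzlen : z.length = P - 2)
    (hz1 : ∀ t : ℕ, t < P - 1 → c (r1 + (t:ℕ)) = (z ++ [a]).getD t a)
    (hz2 : ∀ t : ℕ, t < P - 1 → c (r2 + (t:ℕ)) = (z ++ [b]).getD t a)
    (ki kj : ZMod P) (u : Word) (hm : u.length + 2 ≤ P)
    (hu1 : ∀ t : ℕ, t < u.length + 2 → c (ki + (t:ℕ)) = ([a] ++ u ++ [a]).getD t a)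
    (hu2 : ∀ t : ℕ, t < u.length + 2 → c (kj + (t:ℕ)) = ([b] ++ u ++ [b]).getD t a) :
    False := by
  set m := u.length with hmdef
  set x : ZMod P := r1 + ((P-2:ℕ):ZMod P) with hx
  set δ0 : ZMod P := r2 - r1 with hδ0
  have hxa : c x = a := by
    have := hz1 (P-2) (by omega)
    rw [this, ← hzlen, getD_append_at]
  have hxb : c (x + δ0) = b := by
    have := hz2 (P-2) (by omega)
    rw [show x + δ0 = r2 + ((P-2:ℕ):ZMod P) by rw [hx, hδ0]; ring, this, ← hzlen, getD_append_at]
  have hcastP1 : ((P-1:ℕ):ZMod P) = ((P-2:ℕ):ZMod P) + 1 := by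
    rw [show P-1 = (P-2)+1 by omega]
    push_cast
    ring
  have hE : ∀ k : ZMod P, k ≠ x → k ≠ x + 1 → c (k + δ0) = c k := by
    intro k hk1 hk2
    set t : ℕ := (k - r1).val with ht
    have htP : t < P := ZMod.val_lt _
    have hkt : k = r1 + (t:ℕ) := by rw [ht, zmod_cast_val]; ring
    have htlt : t < P - 2 := by
      rcases Nat.lt_or_ge t (P-2) with h | h
      · exact h
      · exfalso
        rcases Nat.lt_or_ge t (P-1) with h2 | h2
        · exact hk1 (by rw [hkt, show t = P - 2 by omega, hx])
        · have : t = P - 1 := by omega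
          apply hk2
          rw [hkt, this, hcastP1, hx]
          ring
    have e1 : c k = z.getD t a := by
      rw [hkt, hz1 t (by omega), getD_append_left' _ _ _ (by omega)]
    have e2 : c (k + δ0) = z.getD t a := by
      rw [show k + δ0 = r2 + (t:ℕ) by rw [hkt, hδ0]; ring, hz2 t (by omega),
        getD_append_left' _ _ _ (by omega)]
    rw [e1, e2]
  obtain ⟨⟨s0, hs0⟩, hx1m⟩ := unit_and_second_mismatch c x δ0 hxa hxb hE
  have hxm : c (x + δ0) ≠ c x := by rw [hxa, hxb]; simp
  obtain ⟨L1, t0, ht01, ht0P, hs0t0, hchar⟩ := window_balance hP2 c x δ0 s0 hs0 hxm hx1m hE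
  -- counts over the two windows
  have hb1 := count_bound c L1 x s0 t0 ht01 ht0P hs0t0 hchar ki (m+2)
  have hb2 := count_bound c L1 x s0 t0 ht01 ht0P hs0t0 hchar kj (m+2)
  -- compute the two sums
  have hsplit : ∀ (k0 : ZMod P) (e : AB) (v' : Word), v'.length = m →
      (∀ t : ℕ, t < m + 2 → c (k0 + (t:ℕ)) = ([e] ++ v' ++ [e]).getD t a) →
      (∑ t ∈ Finset.range (m+2), if c (k0 + (t:ℕ)) = L1 then (1:ℤ) else 0)
      = (∑ t ∈ Finset.range m, if v'.getD t a = L1 then (1:ℤ) else 0)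
        + 2 * (if e = L1 then (1:ℤ) else 0) := by
    intro k0 e v' hv' hocc
    rw [Finset.sum_range_succ, Finset.sum_range_succ']
    have h0 : c (k0 + ((0:ℕ):ZMod P)) = e := by
      rw [hocc 0 (by omega)]
      rfl
    have hend : c (k0 + ((m+1:ℕ):ZMod P)) = e := by
      rw [hocc (m+1) (by omega)]
      have : ([e] ++ v').length = m + 1 := by simp [hv']
      rw [← this, getD_append_at]
    have hmid : ∀ t : ℕ, t < m → c (k0 + ((t+1:ℕ):ZMod P)) = v'.getD t a := by
      intro t htm
      rw [hocc (t+1) (by omega), getD_append_left' _ _ _ (by simp [hv']; omega)]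
      have : ([e] ++ v') = e :: v' := rfl
      rw [this, getD_cons_succ']
    rw [h0, hend]
    have : (∑ t ∈ Finset.range m, if c (k0 + ((t+1:ℕ):ZMod P)) = L1 then (1:ℤ) else 0)
        = ∑ t ∈ Finset.range m, if v'.getD t a = L1 then (1:ℤ) else 0 := by
      refine Finset.sum_congr rfl (fun t htm => ?_)
      rw [hmid t (Finset.mem_range.mp htm)]
    rw [this]
    ring
  have e1 := hsplit ki a u rfl hu1
  have e2 := hsplit kj b u rfl hu2
  rw [e1] at hb1
  rw [e2] at hb2
  cases L1 <;> simp_all <;> omega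

end Aux

/-- every closed trapezoidal word is Sturmian. -/
theorem closed_trapezoidal_is_sturmian (w : Word)
    (hclosed : IsClosedWord w) (htrap : IsTrapezoidal w) :
    IsSturmian w := by
  obtain ⟨hne, v, hpre, hvlt, hsuf, hocc⟩ := hclosed
  have hK : Kp w = v.length + 1 := Kp_closed hpre hvlt hsuf hocc
  set N := w.length with hN
  set V := v.length with hV
  have hvN : V < N := hvlt
  set P : ℕ := N - V with hPdef
  have hP1 : 1 ≤ P := by omega
  have hR : Rp w = P - 1 := by
    have h2 : N = Kp w + Rp w := htrap
    rw [hK] at h2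
    omega
  -- period structure
  have hgpre : ∀ t, t < V → w.getD t a = v.getD t a := by
    have h0 := (occursAt_iff.mp (prefix_iff_occursAt.mp hpre)).2
    intro t ht
    simpa using h0 t ht
  have hgsuf : ∀ t, t < V → w.getD (N - V + t) a = v.getD t a := by
    have h0 := (occursAt_iff.mp (suffix_iff_occursAt.mp hsuf)).2
    intro t ht
    simpa using h0 t ht
  have hper : ∀ t, t + P < N → w.getD (t + P) a = w.getD t a := by
    intro t ht
    have htV : t < V := by omega
    have h1 : t + P = N - V + t := by omega
    rw [h1, hgsuf t htV, hgpre t htV]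
  have hmod : ∀ t, t < N → w.getD t a = w.getD (t % P) a := by
    intro t
    induction t using Nat.strong_induction_on with
    | _ t ih =>
      intro ht
      rcases Nat.lt_or_ge t P with h | h
      · rw [Nat.mod_eq_of_lt h]
      · have h1 : (t - P) + P = t := by omega
        have h2 := hper (t - P) (by omega)
        rw [h1] at h2
        rw [h2, ih (t - P) (by omega) (by omega), Nat.mod_eq_sub_mod h]
  rintro ⟨u, hau, hbu⟩
  set m := u.length with hm
  have hlena : ([a] ++ u ++ [a]).length = m + 2 := by simp [hm]
  have hlenb : ([b] ++ u ++ [b]).length = m + 2 := by simp [hm]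
  obtain ⟨ia, hia⟩ := infix_iff_occursAt.mp hau
  obtain ⟨jb, hjb⟩ := infix_iff_occursAt.mp hbu
  have hiaN : ia + (m+2) ≤ N := by have := hia.1; rwa [hlena] at this
  have hjbN : jb + (m+2) ≤ N := by have := hjb.1; rwa [hlenb] at this
  have hia2 := (occursAt_iff.mp hia).2
  have hjb2 := (occursAt_iff.mp hjb).2
  rw [hlena] at hia2
  rw [hlenb] at hjb2
  have hgia0 : w.getD ia a = a := by
    have := hia2 0 (by omega)
    simpa using this
  have hgjb0 : w.getD jb a = b := by
    have := hjb2 0 (by omega)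
    simpa using this
  rcases Nat.lt_or_ge P 2 with hP2 | hP2
  · -- P = 1 : w is constant, contradiction
    have hPe : P = 1 := by omega
    have h3 := hmod ia (by omega)
    have h4 := hmod jb (by omega)
    rw [hPe, Nat.mod_one] at h3 h4
    rw [h3] at hgia0
    rw [h4] at hgjb0
    rw [hgia0] at hgjb0
    exact absurd hgjb0 (by simp)
  · haveI : NeZero P := ⟨by omega⟩
    set c : ZMod P → AB := fun k => w.getD k.val a with hc
    have hcw : ∀ t, t < N → c ((t : ℕ) : ZMod P) = w.getD t a := by
      intro t ht
      show w.getD ((t : ZMod P)).val a = w.getD t a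
      rw [ZMod.val_natCast]
      exact (hmod t ht).symm
    have hwin : ∀ (u' : Word) (i : ℕ), OccursAt u' w i → ∀ t, t < u'.length →
        c ((i : ZMod P) + (t : ℕ)) = u'.getD t a := by
      intro u' i hoc t ht
      have h1 := (occursAt_iff.mp hoc).2 t ht
      have h2 : i + t < N := by
        have := (occursAt_iff.mp hoc).1
        omega
      have h3 : ((i + t : ℕ) : ZMod P) = (i : ZMod P) + (t : ℕ) := by push_cast; ring
      rw [← h3, hcw _ h2, h1]
    rcases Nat.lt_or_ge (m + 2) (P + 1) with hcase | hcase
    · -- m + 2 ≤ P : main circular case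
      have hzex : ∃ z : Word, z.length = P - 2 ∧ IsRightSpecial z w := by
        have h1 : P - 2 < Rp w := by omega
        have hrpdef : Rp w = sInf {n | ∀ u : Word, u.length = n → ¬ IsRightSpecial u w} := rfl
        rw [hrpdef] at h1
        have h2 := Nat.notMem_of_lt_sInf h1
        simp only [Set.mem_setOf_eq] at h2
        push_neg at h2
        exact h2
      obtain ⟨z, hzlen, hzrs⟩ := hzex
      obtain ⟨i1, hi1⟩ := infix_iff_occursAt.mp hzrs.1
      obtain ⟨i2, hi2⟩ := infix_iff_occursAt.mp hzrs.2
      have hlz1 : (z ++ [a]).length = P - 1 := by simp [hzlen]; omega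
      have hlz2 : (z ++ [b]).length = P - 1 := by simp [hzlen]; omega
      refine circular_case hP2 c ((i1 : ℕ) : ZMod P) ((i2 : ℕ) : ZMod P) z hzlen
        (fun t ht => ?_) (fun t ht => ?_) ((ia : ℕ) : ZMod P) ((jb : ℕ) : ZMod P) u
        (by omega) (fun t ht => ?_) (fun t ht => ?_)
      · exact hwin _ _ hi1 t (by rw [hlz1]; omega)
      · exact hwin _ _ hi2 t (by rw [hlz2]; omega)
      · exact hwin _ _ hia t (by rw [hlena]; omega)
      · exact hwin _ _ hjb t (by rw [hlenb]; omega)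
    · rcases Nat.lt_or_ge (m + 2) (P + 2) with hc2 | hc2
      · -- m + 1 = P : full-window case
        refine full_window_case c ((ia : ℕ) : ZMod P) ((jb : ℕ) : ZMod P) u
          (fun t ht => ?_) (fun t ht => ?_)
        · have h1 := hwin _ _ hia t (by rw [hlena]; omega)
          rw [h1, getD_append_left' _ _ _ (by simp; omega)]
        · have h1 := hwin _ _ hjb t (by rw [hlenb]; omega)
          rw [h1, getD_append_left' _ _ _ (by simp; omega)]
      · -- m ≥ P : direct contradiction via the period
        have key : ∀ (i : ℕ) (e : AB), i + (m+2) ≤ N →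
            (∀ t, t < m + 2 → w.getD (i + t) a = ([e] ++ u ++ [e]).getD t a) →
            u.getD (P-1) a = e := by
          intro i e hiN h2
          have h3 : w.getD (i + P) a = u.getD (P-1) a := by
            rw [h2 P (by omega), getD_append_left' _ _ _ (by simp; omega)]
            rw [show ([e] ++ u : Word) = e :: u from rfl, show P = (P-1)+1 by omega,
              getD_cons_succ']
            all_goals (congr 1 <;> omega)
          have h4 : w.getD (i + P) a = w.getD i a := hper i (by omega)
          have h5 : w.getD i a = e := by
            have := h2 0 (by omega)
            simpa using this
          rw [← h3, h4, h5]
        have ka := key ia a hiaN hia2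
        have kb := key jb b hjbN hjb2
        rw [ka] at kb
        exact absurd kb (by simp)
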